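/- For every admissible path p ∈ P_{a,b} and every s ≥ 1, one has n ≤ p(2s+1) + p(2s) ≤ m. -/
import Mathlib


namespace Stmt3

/-- The ground-state path value `\bar p(s; a, b)`. -/
def barp (m n a b : ℤ) (s : ℕ) : ℤ :=
  if s % 2 = 1 then n - b else if s % 4 = 0 then a + b else m - n - a + b

/-- Membership in the path space `P_{a,b}`. -/
def IsPath (m n a b : ℤ) (p : ℕ → ℤ) : Prop :=
  (∀ s : ℕ, 1 ≤ s → 0 ≤ p s ∧ p s ≤ (if s % 2 = 1 then n else m)) ∧
  ∃ S : ℕ, ∀ s ≥ S, p s = barp m n a b s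

/-- The eventual (ground-state) weight sequence `ā(s)`. -/
def abar (m n a b : ℤ) (s : ℕ) : ℤ :=
  if s % 4 = 1 then a + b
  else if s % 4 = 2 then n + a - b
  else if s % 4 = 3 then m - n - a + b
  else m - a - b

/-- `A` is the weight sequence `a_p` attached to the path `p`. -/
def IsWeightSeq (m n a b : ℤ) (p A : ℕ → ℤ) : Prop :=
  (∀ s : ℕ, 1 ≤ s → A s = A (s + 1) + (if s % 2 = 1 then n else m) - 2 * p s) ∧
  ∃ S : ℕ, ∀ s ≥ S, A s = abar m n a b s

/-- The admissibility inequalities for the weight sequence `A = a_p`. -/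
def AdmIneq (m n : ℤ) (p A : ℕ → ℤ) : Prop :=
  ∀ s : ℕ, 1 ≤ s →
    p s ≤ A (s + 1) ∧ (if s % 2 = 1 then n else m) - p s ≤ m - A (s + 1)

/-- `{a}_b` : `a` if `a ≤ b`, and `2b - a` if `a ≥ b`. -/
def curly (x c : ℤ) : ℤ := if x ≤ c then x else 2 * c - x

def h1 (m n i j k : ℤ) : ℤ :=
  if i + j ≤ min m n then curly (k + j) n
  else if m ≤ i + j ∧ i + j ≤ n then curly (k + i + 2 * j - m) n
  else if n ≤ i + j ∧ i + j ≤ m then curly (k + n - i) n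
  else curly (k + n - m + j) n

def h2 (m n i j k : ℤ) : ℤ :=
  if j + k ≤ min m n then curly (i + j) m
  else if m ≤ j + k ∧ j + k ≤ n then curly (i + m - k) m
  else if n ≤ j + k ∧ j + k ≤ m then curly (i + k + 2 * j - n) m
  else curly (i + j + m - n) m

def h3 (m n i j : ℤ) : ℤ :=
  if i + j ≤ min m n then i + j
  else if m ≤ i + j ∧ i + j ≤ n then m
  else if n ≤ i + j ∧ i + j ≤ m then n
  else m + n - i - j

/-- The `s`-th term in the sum defining the crystal energy. -/
def eterm (m n a b : ℤ) (p : ℕ → ℤ) (s : ℕ) : ℤ :=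
  (h1 m n (p (2 * s + 1)) (p (2 * s)) (p (2 * s - 1))
    - h1 m n (barp m n a b (2 * s + 1)) (barp m n a b (2 * s)) (barp m n a b (2 * s - 1)))
  + (h2 m n (p (2 * s + 2)) (p (2 * s + 1)) (p (2 * s))
    - h2 m n (barp m n a b (2 * s + 2)) (barp m n a b (2 * s + 1)) (barp m n a b (2 * s)))
  + 2 * (h3 m n (p (2 * s + 1)) (p (2 * s))
    - h3 m n (barp m n a b (2 * s + 1)) (barp m n a b (2 * s)))

/-- `H` is the crystal energy `h(p)`; the sum has finitely many nonzero terms, so the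
partial sums are eventually constant. -/
def IsEnergy (m n a b : ℤ) (p : ℕ → ℤ) (H : ℤ) : Prop :=
  ∃ S0 : ℕ, ∀ S ≥ S0, H = -∑ s ∈ Finset.Icc 1 S, (s : ℤ) * eterm m n a b p s

/-- The RSOS path `r_p` read off from the weight sequence `A = a_p`. -/
def rOf (m : ℤ) (A : ℕ → ℤ) (s : ℕ) : ℤ :=
  if s % 2 = 1 then A (2 * s - 1) else m - A (2 * s - 1)

theorem stmt3 (m n a b : ℤ) (hmn : n < m) (hn : 1 ≤ n)
    (ha0 : 0 ≤ a) (ha1 : a ≤ m - n) (hb0 : 0 ≤ b) (hb1 : b ≤ n)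
    (p A : ℕ → ℤ) (hp : IsPath m n a b p)
    (hA : IsWeightSeq m n a b p A) (hadm : AdmIneq m n p A) :
    ∀ s : ℕ, 1 ≤ s → n ≤ p (2 * s + 1) + p (2 * s) ∧ p (2 * s + 1) + p (2 * s) ≤ m := by
  intro s hs
  have hrec := hA.1 (2 * s + 1) (by omega)
  have h1 := hadm (2 * s) (by omega)
  have h2 := hadm (2 * s + 1) (by omega)
  have e0 : (2 * s) % 2 = 0 := by omega
  have e1 : (2 * s + 1) % 2 = 1 := by omega
  rw [e0] at h1
  rw [e1] at hrec h2
  norm_num at hrec h1 h2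
  constructor <;> linarith [h1.1, h1.2, h2.1, h2.2]

end Stmt3
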